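/- Let f : ℂ → ℂ be an entire function belonging to the class A_{2,0}, i.e., for every ε > 0 there exists A_ε > 0 such that |f(z)| ≤ A_ε·exp(ε|z|²) for all z ∈ ℂ. Then for every λ ∈ ℂ the series g(z) = Σ_{l=0}^{∞} (λ^l/l!)·f^{(2l)}(z) (where f^{(2l)} is the 2l-th complex derivative of f) converges uniformly on every compact subset of ℂ, its sum g is an entire function, and g again belongs to A_{2,0}: for every ε > 0 there exists B_ε > 0 such that |g(z)| ≤ B_ε·exp(ε|z|²) for all z ∈ ℂ. -/

import Mathlib

open Finset in
lemma A20aux_choose_le (n k : ℕ) : n.choose k ≤ 2 ^ n := by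
  rcases le_or_gt k n with h | h
  · calc n.choose k ≤ ∑ i ∈ Finset.range (n+1), n.choose i :=
        Finset.single_le_sum (fun i _ => Nat.zero_le _) (Finset.mem_range.mpr (Nat.lt_succ_of_le h))
      _ = 2 ^ n := Nat.sum_range_choose n
  · simp [Nat.choose_eq_zero_of_lt h]

lemma A20aux_factorial (l : ℕ) : (2*l).factorial ≤ 4^l * (l.factorial * l.factorial) := by
  have h := Nat.choose_mul_factorial_mul_factorial (show l ≤ 2*l by omega)
  have h2 : 2*l - l = l := by omega
  rw [h2] at h
  calc (2*l).factorial = (2*l).choose l * l.factorial * l.factorial := h.symm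
    _ ≤ 2^(2*l) * l.factorial * l.factorial :=
        Nat.mul_le_mul_right _ (Nat.mul_le_mul_right _ (A20aux_choose_le _ _))
    _ = 4^l * (l.factorial * l.factorial) := by rw [pow_mul]; ring

lemma A20aux_cauchy {f : ℂ → ℂ} (hf : Differentiable ℂ f) (z : ℂ) {r M : ℝ} (hr : 0 < r)
    (hM : ∀ θ : ℝ, ‖f (circleMap z r θ)‖ ≤ M) (n : ℕ) :
    ‖iteratedDeriv n f z‖ ≤ n.factorial * M / r ^ n := by
  have hM0 : 0 ≤ M := (norm_nonneg _).trans (hM 0)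
  set R : NNReal := ⟨r, hr.le⟩ with hRdef
  have hRr : (R : ℝ) = r := rfl
  have hR : 0 < R := hr
  have h := hf.hasFPowerSeriesOnBall z hR
  have h1 : iteratedDeriv n f z = n.factorial • ((cauchyPowerSeries f z R n) fun _ => (1:ℂ)) := by
    rw [iteratedDeriv_eq_iteratedFDeriv, ← h.factorial_smul (1:ℂ) n]
  have h2 : ‖(cauchyPowerSeries f z (R:ℝ) n) fun _ => (1:ℂ)‖ ≤ ‖cauchyPowerSeries f z (R:ℝ) n‖ := by
    simpa using (cauchyPowerSeries f z (R:ℝ) n).le_opNorm fun _ => (1:ℂ)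
  have h3 := norm_cauchyPowerSeries_le f z (R:ℝ) n
  have hint : (∫ θ : ℝ in (0)..2 * Real.pi, ‖f (circleMap z (R:ℝ) θ)‖) ≤ 2 * Real.pi * M := by
    have hcont : Continuous fun θ : ℝ => ‖f (circleMap z (R:ℝ) θ)‖ :=
      (hf.continuous.comp (continuous_circleMap z (R:ℝ))).norm
    have := intervalIntegral.integral_mono_on (μ := MeasureTheory.volume) (g := fun _ => M)
      Real.two_pi_pos.le (hcont.intervalIntegrable 0 (2*Real.pi))
      intervalIntegrable_const (fun θ _ => hM θ)
    simpa using this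
  have h4 : ‖cauchyPowerSeries f z (R:ℝ) n‖ ≤ M * (r⁻¹) ^ n := by
    refine h3.trans ?_
    rw [hRr]
    have habs : |r| = r := abs_of_pos hr
    rw [habs]
    apply mul_le_mul_of_nonneg_right _ (by positivity)
    calc (2 * Real.pi)⁻¹ * ∫ θ : ℝ in (0)..2 * Real.pi, ‖f (circleMap z r θ)‖
        ≤ (2 * Real.pi)⁻¹ * (2 * Real.pi * M) := by
          apply mul_le_mul_of_nonneg_left _ (by positivity)
          simpa [hRr] using hint
      _ = M := by field_simp
  rw [h1, ← Nat.cast_smul_eq_nsmul ℂ, norm_smul]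
  simp only [Complex.norm_natCast]
  calc (n.factorial : ℝ) * ‖(cauchyPowerSeries f z (R:ℝ) n) fun _ => (1:ℂ)‖
      ≤ (n.factorial : ℝ) * (M * (r⁻¹)^n) := by
        apply mul_le_mul_of_nonneg_left (h2.trans h4) (by positivity)
    _ = n.factorial * M / r ^ n := by rw [inv_pow]; ring

lemma A20aux_term {f : ℂ → ℂ} (hf : Differentiable ℂ f) {ε A : ℝ} (hε : 0 < ε) (hA : 0 < A)
    (hb : ∀ z : ℂ, ‖f z‖ ≤ A * Real.exp (ε * ‖z‖^2)) (lam : ℂ) (l : ℕ) (z : ℂ) :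
    ‖lam ^ l / (l.factorial : ℂ) * iteratedDeriv (2*l) f z‖ ≤
      A * Real.exp 1 * Real.exp (2*ε*‖z‖^2) * (8*ε*Real.exp 1*‖lam‖)^l := by
  set r : ℝ := Real.sqrt (((l:ℝ)+1)/(2*ε)) with hrdef
  have hr : 0 < r := Real.sqrt_pos.mpr (by positivity)
  have hr2 : r^2 = ((l:ℝ)+1)/(2*ε) := Real.sq_sqrt (by positivity)
  set E : ℝ := Real.exp (2*ε*‖z‖^2) with hEdef
  have hE : 0 < E := Real.exp_pos _
  set M : ℝ := A * E * Real.exp ((l:ℝ)+1) with hMdef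
  have hM0 : 0 < M := by positivity
  have hM : ∀ θ : ℝ, ‖f (circleMap z r θ)‖ ≤ M := by
    intro θ
    have h1 : ‖circleMap z r θ‖ ≤ ‖z‖ + r := by
      calc ‖circleMap z r θ‖ ≤ ‖z‖ + ‖(r : ℂ) * Complex.exp (θ * Complex.I)‖ := by
            rw [circleMap]; exact norm_add_le _ _
        _ = ‖z‖ + r := by
            rw [norm_mul, Complex.norm_real, Complex.norm_exp_ofReal_mul_I, Real.norm_eq_abs,
              abs_of_pos hr, mul_one]
    refine (hb _).trans ?_
    rw [hMdef, mul_assoc, ← Real.exp_add]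
    apply mul_le_mul_of_nonneg_left _ hA.le
    apply Real.exp_le_exp.mpr
    have h2 : ε * ‖circleMap z r θ‖^2 ≤ ε * (‖z‖+r)^2 :=
      mul_le_mul_of_nonneg_left (pow_le_pow_left₀ (norm_nonneg _) h1 2) hε.le
    refine h2.trans ?_
    have h3 : (‖z‖+r)^2 ≤ 2*‖z‖^2 + 2*r^2 := by nlinarith [sq_nonneg (‖z‖ - r)]
    have h4 : 2*ε*r^2 = (l:ℝ)+1 := by rw [hr2]; field_simp
    nlinarith [hε.le, sq_nonneg (‖z‖ - r), mul_le_mul_of_nonneg_left h3 hε.le]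
  have hc := A20aux_cauchy hf z hr hM (2*l)
  have hrpow : r^(2*l) = ((((l:ℝ)+1))/(2*ε))^l := by rw [pow_mul, hr2]
  have hkey : ((2*l).factorial : ℝ) * (2*ε)^l ≤ (l.factorial:ℝ) * (8*ε)^l * ((l:ℝ)+1)^l := by
    have hf1 : ((2*l).factorial : ℝ) ≤ 4^l * ((l.factorial:ℝ) * l.factorial) := by
      exact_mod_cast A20aux_factorial l
    have hf2 : (l.factorial : ℝ) ≤ ((l:ℝ)+1)^l := by
      calc (l.factorial : ℝ) ≤ ((l:ℝ))^l := by exact_mod_cast Nat.factorial_le_pow l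
        _ ≤ ((l:ℝ)+1)^l := pow_le_pow_left₀ (by positivity) (by linarith) l
    calc ((2*l).factorial : ℝ) * (2*ε)^l
        ≤ (4^l * ((l.factorial:ℝ) * l.factorial)) * (2*ε)^l :=
          mul_le_mul_of_nonneg_right hf1 (by positivity)
      _ ≤ (4^l * ((l.factorial:ℝ) * ((l:ℝ)+1)^l)) * (2*ε)^l := by
          apply mul_le_mul_of_nonneg_right _ (by positivity)
          apply mul_le_mul_of_nonneg_left _ (by positivity)
          exact mul_le_mul_of_nonneg_left hf2 (by positivity)
      _ = (l.factorial:ℝ) * (8*ε)^l * ((l:ℝ)+1)^l := by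
          have h8 : (8*ε:ℝ)^l = 4^l * (2*ε)^l := by
            rw [show (8*ε:ℝ) = 4*(2*ε) by ring, mul_pow]
          rw [h8]; ring
  have step : ‖iteratedDeriv (2*l) f z‖ ≤ (l.factorial:ℝ) * (8*ε)^l * M := by
    refine hc.trans ?_
    rw [div_le_iff₀ (by positivity), hrpow, div_pow, mul_div_assoc', le_div_iff₀ (by positivity)]
    calc ((2*l).factorial:ℝ) * M * (2*ε)^l = (((2*l).factorial:ℝ) * (2*ε)^l) * M := by ring
      _ ≤ ((l.factorial:ℝ) * (8*ε)^l * ((l:ℝ)+1)^l) * M := mul_le_mul_of_nonneg_right hkey hM0.le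
      _ = (l.factorial:ℝ) * (8*ε)^l * M * ((l:ℝ)+1)^l := by ring
  have hnorm : ‖lam ^ l / (l.factorial : ℂ) * iteratedDeriv (2*l) f z‖
      = ‖lam‖^l / (l.factorial : ℝ) * ‖iteratedDeriv (2*l) f z‖ := by
    rw [norm_mul, norm_div, norm_pow, Complex.norm_natCast]
  have hexp : Real.exp ((l:ℝ)+1) = Real.exp 1 ^ l * Real.exp 1 := by
    rw [Real.exp_add]
    congr 1
    rw [← Real.exp_nat_mul, mul_one]
  have hfac : (0:ℝ) < (l.factorial : ℝ) := by positivity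
  rw [hnorm]
  calc ‖lam‖^l / (l.factorial : ℝ) * ‖iteratedDeriv (2*l) f z‖
      ≤ ‖lam‖^l / (l.factorial : ℝ) * ((l.factorial:ℝ) * (8*ε)^l * M) :=
        mul_le_mul_of_nonneg_left step (by positivity)
    _ = A * Real.exp 1 * E * (8*ε*Real.exp 1*‖lam‖)^l := by
        have hel : Real.exp ((l:ℝ)) = Real.exp 1 ^ l := by
          rw [← Real.exp_nat_mul, mul_one]
        rw [hMdef, hexp]
        field_simp
        ring

/-- Let `f : ℂ → ℂ` be entire and in the class `A_{2,0}`: for every `ε > 0`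
there is `A_ε > 0` with `|f(z)| ≤ A_ε·exp(ε|z|²)` for all `z`.  Then for every `λ ∈ ℂ` the
series `g(z) = ∑_{l≥0} (λ^l/l!)·f^{(2l)}(z)` converges uniformly on every compact subset of
`ℂ`, its sum `g` is entire, and `g ∈ A_{2,0}`. -/
theorem convolution_operator_preserves_A20
    (f : ℂ → ℂ) (hf : Differentiable ℂ f)
    (hgrowth : ∀ ε : ℝ, 0 < ε → ∃ A : ℝ, 0 < A ∧
      ∀ z : ℂ, ‖f z‖ ≤ A * Real.exp (ε * ‖z‖ ^ 2))
    (lam : ℂ) :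
    ∃ g : ℂ → ℂ,
      (∀ z : ℂ, HasSum (fun l : ℕ =>
        lam ^ l / (l.factorial : ℂ) * iteratedDeriv (2 * l) f z) (g z))
      ∧ (∀ K : Set ℂ, IsCompact K →
          TendstoUniformlyOn
            (fun (N : ℕ) (z : ℂ) => ∑ l ∈ Finset.range N,
              lam ^ l / (l.factorial : ℂ) * iteratedDeriv (2 * l) f z)
            g Filter.atTop K)
      ∧ Differentiable ℂ g
      ∧ ∀ ε : ℝ, 0 < ε → ∃ B : ℝ, 0 < B ∧
          ∀ z : ℂ, ‖g z‖ ≤ B * Real.exp (ε * ‖z‖ ^ 2) := by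
  have hgrowth' : ∀ ε : ℝ, 0 < ε → ∃ A : ℝ, 0 < A ∧
      ∀ z : ℂ, ‖f z‖ ≤ A * Real.exp (ε * ‖z‖ ^ 2) := by
    intro ε hε
    obtain ⟨A, hA, h⟩ := hgrowth ε hε
    exact ⟨A, hA, fun z => by simpa using h z⟩
  have master : ∀ δ : ℝ, 0 < δ → ∃ C : ℝ, 0 < C ∧ ∀ (l : ℕ) (z : ℂ),
      ‖lam ^ l / (l.factorial : ℂ) * iteratedDeriv (2 * l) f z‖ ≤
        C * Real.exp (δ * ‖z‖^2) * (1/2)^l := by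
    intro δ hδ
    have he1 : (0:ℝ) < Real.exp 1 := Real.exp_pos 1
    set ε : ℝ := min (δ/2) (1/(16*Real.exp 1*(‖lam‖+1))) with hεdef
    have hε : 0 < ε := lt_min (by linarith) (by positivity)
    obtain ⟨A, hA, hb⟩ := hgrowth' ε hε
    refine ⟨A * Real.exp 1, by positivity, fun l z => ?_⟩
    refine (A20aux_term hf hε hA hb lam l z).trans ?_
    have h1 : Real.exp (2*ε*‖z‖^2) ≤ Real.exp (δ*‖z‖^2) := by
      apply Real.exp_le_exp.mpr
      have h := min_le_left (δ/2) (1/(16*Real.exp 1*(‖lam‖+1)))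
      rw [← hεdef] at h
      nlinarith [sq_nonneg ‖z‖]
    have h2 : (8*ε*Real.exp 1*‖lam‖)^l ≤ (1/2:ℝ)^l := by
      apply pow_le_pow_left₀ (by positivity)
      have hεle : ε ≤ 1/(16*Real.exp 1*(‖lam‖+1)) := min_le_right _ _
      have h := (le_div_iff₀ (by positivity)).mp hεle
      nlinarith [mul_nonneg hε.le he1.le, norm_nonneg lam,
        mul_nonneg (mul_nonneg hε.le he1.le) (norm_nonneg lam)]
    exact mul_le_mul (mul_le_mul_of_nonneg_left h1 (by positivity)) h2 (by positivity)
      (by positivity)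
  obtain ⟨C₀, hC₀, hb₀⟩ := master 1 one_pos
  have hgeo : Summable (fun l : ℕ => (1/2:ℝ)^l) :=
    summable_geometric_of_lt_one (by norm_num) (by norm_num)
  have hsumnorm : ∀ z : ℂ, Summable (fun l : ℕ =>
      ‖lam ^ l / (l.factorial : ℂ) * iteratedDeriv (2 * l) f z‖) := by
    intro z
    exact Summable.of_nonneg_of_le (fun l => norm_nonneg _) (fun l => hb₀ l z)
      (hgeo.mul_left _)
  set g : ℂ → ℂ := fun z => ∑' l : ℕ,
    lam ^ l / (l.factorial : ℂ) * iteratedDeriv (2 * l) f z with hgdef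
  have hhs : ∀ z : ℂ, HasSum (fun l : ℕ =>
      lam ^ l / (l.factorial : ℂ) * iteratedDeriv (2 * l) f z) (g z) :=
    fun z => ((hsumnorm z).of_norm).hasSum
  have huc : ∀ K : Set ℂ, IsCompact K →
      TendstoUniformlyOn
        (fun (N : ℕ) (z : ℂ) => ∑ l ∈ Finset.range N,
          lam ^ l / (l.factorial : ℂ) * iteratedDeriv (2 * l) f z)
        g Filter.atTop K := by
    intro K hK
    obtain ⟨R, hR⟩ := hK.isBounded.subset_closedBall 0
    apply tendstoUniformlyOn_tsum_nat
      (u := fun l : ℕ => C₀ * Real.exp (1 * (max R 0)^2) * (1/2)^l)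
      (hgeo.mul_left _)
    intro l x hx
    refine (hb₀ l x).trans ?_
    have hxR : ‖x‖ ≤ max R 0 := by
      have := hR hx
      rw [Metric.mem_closedBall, dist_zero_right] at this
      exact this.trans (le_max_left _ _)
    have hexp : Real.exp (1*‖x‖^2) ≤ Real.exp (1*(max R 0)^2) := by
      apply Real.exp_le_exp.mpr
      nlinarith [pow_le_pow_left₀ (norm_nonneg x) hxR 2]
    apply mul_le_mul_of_nonneg_right _ (by positivity)
    exact mul_le_mul_of_nonneg_left hexp hC₀.le
  have hder : ∀ m : ℕ, Differentiable ℂ (iteratedDeriv m f) := by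
    intro m
    have hcd : ContDiff ℂ (⊤ : ℕ∞) f := hf.contDiff
    exact (contDiff_iff_iteratedDeriv.mp hcd).2 m (by simp)
  have hpart : ∀ N : ℕ, Differentiable ℂ (fun z => ∑ l ∈ Finset.range N,
      lam ^ l / (l.factorial : ℂ) * iteratedDeriv (2 * l) f z) := by
    intro N
    exact Differentiable.fun_sum fun l _ => (hder (2*l)).const_mul _
  have hdg : Differentiable ℂ g := by
    have hlu : TendstoLocallyUniformlyOn
        (fun (N : ℕ) (z : ℂ) => ∑ l ∈ Finset.range N,
          lam ^ l / (l.factorial : ℂ) * iteratedDeriv (2 * l) f z)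
        g Filter.atTop Set.univ := by
      rw [tendstoLocallyUniformlyOn_iff_forall_isCompact isOpen_univ]
      intro K _ hK
      exact huc K hK
    have := hlu.differentiableOn
      (Filter.Eventually.of_forall fun N => (hpart N).differentiableOn) isOpen_univ
    rw [← differentiableOn_univ]
    exact this
  refine ⟨g, hhs, huc, hdg, ?_⟩
  intro ε hε
  obtain ⟨C, hC, hbC⟩ := master ε hε
  refine ⟨2*C, by positivity, fun z => ?_⟩
  have h1 : ‖g z‖ ≤ ∑' l : ℕ,
      ‖lam ^ l / (l.factorial : ℂ) * iteratedDeriv (2 * l) f z‖ :=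
    norm_tsum_le_tsum_norm (hsumnorm z)
  have h2 : (∑' l : ℕ, ‖lam ^ l / (l.factorial : ℂ) * iteratedDeriv (2 * l) f z‖)
      ≤ ∑' l : ℕ, C * Real.exp (ε*‖z‖^2) * (1/2)^l :=
    Summable.tsum_le_tsum (fun l => hbC l z) (hsumnorm z) (hgeo.mul_left _)
  have h3 : (∑' l : ℕ, C * Real.exp (ε*‖z‖^2) * (1/2:ℝ)^l)
      = C * Real.exp (ε*‖z‖^2) * 2 := by
    rw [tsum_mul_left, tsum_geometric_of_lt_one (by norm_num) (by norm_num)]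
    norm_num
  linarith [h1, h2, h3.le, h3.ge]
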